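/- In a simple preordered abelian monoid S, every element is either finite or properly infinite; that is, every infinite element of S is properly infinite. -/
import Mathlib

/-- In a simple preordered abelian monoid, every infinite element is properly infinite;
hence every element is either finite or properly infinite. -/
theorem stmt1 {S : Type*} [AddCommMonoid S] [Preorder S]
    (hzero : ∀ x : S, 0 ≤ x)
    (hadd : ∀ x y z : S, x ≤ y → x + z ≤ y + z)
    (hsimple : ∀ x y : S, y ≠ 0 → ∃ n : ℕ, x ≤ n • y)
    (x : S) (hx : x ≠ 0) (z : S) (hz : z ≠ 0) (hinf : x + z ≤ x) :
    x + x ≤ x := by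
  obtain ⟨n, hn⟩ := hsimple x z hz
  have key : ∀ m : ℕ, x + m • z ≤ x := by
    intro m
    induction m with
    | zero => simp
    | succ k ih =>
      calc x + (k + 1) • z = (x + k • z) + z := by rw [succ_nsmul, ← add_assoc]
        _ ≤ x + z := hadd _ _ _ ih
        _ ≤ x := hinf
  calc x + x = x + x := rfl
    _ ≤ n • z + x := hadd _ _ _ hn
    _ = x + n • z := add_comm _ _
    _ ≤ x := key n
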